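/- arXiv:2510.10972 — 7 statements merged into one kernel-verified Lean document; each statement's English description precedes it below -/
import Mathlib

section
/- For m = n ≥ 2, the biquadratic tensor A = Σ_{p=1}^m e_p ⊗ e_p ⊗ e_p ⊗ e_p (where e_p are the standard basis vectors of ℝ^m) is strongly completely positive but not positive definite: indeed A e_1 e_2 e_1 e_2 = 0. -/
open scoped BigOperators

lemma single_span {m : ℕ} :
    Submodule.span ℝ (Set.range fun p : Fin m => (Pi.single p 1 : Fin m → ℝ)) = ⊤ := by
  rw [← (Pi.basisFun ℝ (Fin m)).span_eq]
  congr 1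
  ext f
  constructor
  · rintro ⟨p, rfl⟩; exact ⟨p, by simp [Pi.basisFun_apply]⟩
  · rintro ⟨p, rfl⟩; exact ⟨p, by simp [Pi.basisFun_apply]⟩

lemma vanish_sum {m : ℕ} (hm : 2 ≤ m)
    (a : Fin m → Fin m → Fin m → Fin m → ℝ)
    (ha : ∀ i j k l, a i j k l = if i = j ∧ j = k ∧ k = l then 1 else 0) :
    (∑ i, ∑ j, ∑ k, ∑ l, a i j k l *
        (Pi.single (⟨0, Nat.lt_of_lt_of_le (by norm_num) hm⟩ : Fin m) (1:ℝ) : Fin m → ℝ) i *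
        (Pi.single (⟨1, Nat.lt_of_lt_of_le (by norm_num) hm⟩ : Fin m) (1:ℝ) : Fin m → ℝ) j *
        (Pi.single (⟨0, Nat.lt_of_lt_of_le (by norm_num) hm⟩ : Fin m) (1:ℝ) : Fin m → ℝ) k *
        (Pi.single (⟨1, Nat.lt_of_lt_of_le (by norm_num) hm⟩ : Fin m) (1:ℝ) : Fin m → ℝ) l) = 0 := by
  have h01 : (⟨0, Nat.lt_of_lt_of_le (by norm_num) hm⟩ : Fin m) ≠ ⟨1, Nat.lt_of_lt_of_le (by norm_num) hm⟩ := by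
    intro h; simpa using congrArg Fin.val h
  simp only [ha, Pi.single_apply]
  simp only [ite_mul, mul_ite, mul_one, mul_zero, zero_mul, one_mul]
  rw [Finset.sum_eq_single (⟨0, Nat.lt_of_lt_of_le (by norm_num) hm⟩ : Fin m)]
  · rw [Finset.sum_eq_single (⟨1, Nat.lt_of_lt_of_le (by norm_num) hm⟩ : Fin m)]
    · simp [h01, h01.symm]
    · intro b _ hb; simp [hb]
    · simp
  · intro b _ hb
    simp [hb]
  · simp


lemma decomp_eq {m : ℕ} (i j k l : Fin m) :
    (if i = j ∧ j = k ∧ k = l then (1:ℝ) else 0) =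
      ∑ p, (Pi.single p 1 : Fin m → ℝ) i * (Pi.single p 1 : Fin m → ℝ) j *
        (Pi.single p 1 : Fin m → ℝ) k * (Pi.single p 1 : Fin m → ℝ) l := by
  simp only [Pi.single_apply]
  simp only [ite_mul, mul_ite, mul_one, mul_zero, zero_mul, one_mul]
  rw [Finset.sum_eq_single i]
  · split_ifs <;> simp_all
  · intro b _ hb; simp [Ne.symm hb]
  · simp

/-- the diagonal tensor `∑_p e_p ⊗ e_p ⊗ e_p ⊗ e_p` (m = n ≥ 2) is
strongly completely positive but not positive definite; indeed its biquadratic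
form vanishes at (e_1, e_2). -/
theorem diagonal_tensor_strongly_cpb_not_pd {m : ℕ} (hm : 2 ≤ m)
    (a : Fin m → Fin m → Fin m → Fin m → ℝ)
    (ha : ∀ i j k l, a i j k l = if i = j ∧ j = k ∧ k = l then 1 else 0) :
    (∃ (r : ℕ) (u : Fin r → Fin m → ℝ) (v : Fin r → Fin m → ℝ),
      (∀ p i, 0 ≤ u p i) ∧ (∀ p j, 0 ≤ v p j) ∧
      (∀ i j k l, a i j k l = ∑ p, u p i * v p j * u p k * v p l) ∧
      Submodule.span ℝ (Set.range u) = ⊤ ∧ Submodule.span ℝ (Set.range v) = ⊤) ∧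
    (∑ i, ∑ j, ∑ k, ∑ l, a i j k l *
        (Pi.single (⟨0, by omega⟩ : Fin m) (1:ℝ) : Fin m → ℝ) i *
        (Pi.single (⟨1, by omega⟩ : Fin m) (1:ℝ) : Fin m → ℝ) j *
        (Pi.single (⟨0, by omega⟩ : Fin m) (1:ℝ) : Fin m → ℝ) k *
        (Pi.single (⟨1, by omega⟩ : Fin m) (1:ℝ) : Fin m → ℝ) l) = 0 ∧
    ¬ (∀ (x y : Fin m → ℝ), x ≠ 0 → y ≠ 0 →
        0 < ∑ i, ∑ j, ∑ k, ∑ l, a i j k l * x i * y j * x k * y l) := by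
  have hzero := vanish_sum hm a ha
  refine ⟨⟨m, fun p => Pi.single p 1, fun p => Pi.single p 1, ?_, ?_, ?_, single_span, single_span⟩,
      hzero, ?_⟩
  · intro p i; by_cases h : i = p <;> simp [Pi.single_apply, h]
  · intro p i; by_cases h : i = p <;> simp [Pi.single_apply, h]
  · intro i j k l
    rw [ha, decomp_eq]
  · intro hpd
    have hx : (Pi.single (⟨0, by omega⟩ : Fin m) (1:ℝ) : Fin m → ℝ) ≠ 0 := by
      intro h
      have := congrFun h (⟨0, by omega⟩ : Fin m)
      simp at this
    have hy : (Pi.single (⟨1, by omega⟩ : Fin m) (1:ℝ) : Fin m → ℝ) ≠ 0 := by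
      intro h
      have := congrFun h (⟨1, by omega⟩ : Fin m)
      simp at this
    have := hpd _ _ hx hy
    rw [hzero] at this
    exact lt_irrefl 0 this
end

section
/- The biquadratic form of the tensor given by A x y x y = (x_1 y_2 + x_2 y_1)^2 is a sum of squares of bilinear forms, but this tensor is not weakly completely positive: there is no decomposition a_{ijkl} = Σ_{p=1}^r u_i^{(p)} v_j^{(p)} u_k^{(p)} v_l^{(p)} with real vectors u^{(p)}, v^{(p)} ∈ ℝ^2. -/
open scoped BigOperators

/-- the SOS biquadratic tensor with form `(x₁y₂ + x₂y₁)²` is not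
weakly completely positive. -/
theorem sos_not_weakly_cpb
    (a : Fin 2 → Fin 2 → Fin 2 → Fin 2 → ℝ)
    (ha : ∀ i j k l, a i j k l = if i ≠ j ∧ k ≠ l then 1 else 0) :
    (∀ (x y : Fin 2 → ℝ),
      (∑ i, ∑ j, ∑ k, ∑ l, a i j k l * x i * y j * x k * y l)
        = (x 0 * y 1 + x 1 * y 0) ^ 2) ∧
    ¬ (∃ (r : ℕ) (u : Fin r → Fin 2 → ℝ) (v : Fin r → Fin 2 → ℝ),
        ∀ i j k l, a i j k l = ∑ p, u p i * v p j * u p k * v p l) := by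
  constructor
  · intro x y
    simp only [Fin.sum_univ_two, ha]
    norm_num
    ring
  · rintro ⟨r, u, v, h⟩
    have h00 := h 0 0 0 0
    rw [ha] at h00
    simp only [ne_eq, not_true_eq_false, false_and, if_false] at h00
    have hsq : ∑ p, (u p 0 * v p 0) ^ 2 = 0 := by
      rw [← h00.symm] at *
      rw [← h00]
      apply Finset.sum_congr rfl
      intro p _
      ring
    have hz : ∀ p, u p 0 * v p 0 = 0 := by
      intro p
      have := (Finset.sum_eq_zero_iff_of_nonneg (fun p _ => sq_nonneg (u p 0 * v p 0))).mp hsq p (Finset.mem_univ p)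
      exact pow_eq_zero_iff (n := 2) (by norm_num) |>.mp this
    have h0110 := h 0 1 1 0
    rw [ha] at h0110
    simp only [ne_eq, if_pos] at h0110
    · have : (∑ p, u p 0 * v p 1 * u p 1 * v p 0) = 0 := by
        apply Finset.sum_eq_zero
        intro p _
        have : u p 0 * v p 1 * u p 1 * v p 0 = (u p 0 * v p 0) * (v p 1 * u p 1) := by ring
        rw [this, hz p, zero_mul]
      rw [this] at h0110
      norm_num at h0110
end

section
/- If B ∈ ℝ^{m×m} and C ∈ ℝ^{n×n} are completely positive matrices, then the biquadratic tensor A with a_{ijkl} = b_{ik} c_{jl} is completely positive biquadratic: it admits a decomposition a_{ijkl} = Σ_{t=1}^R (x_t)_i (y_t)_j (x_t)_k (y_t)_l with nonnegative vectors x_t ∈ ℝ^m_+, y_t ∈ ℝ^n_+. -/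
open scoped BigOperators

/-- the outer product of two completely positive matrices is a
completely positive biquadratic tensor. -/
theorem outer_product_of_cp_matrices_is_cpb {m n rB rC : ℕ}
    (b : Fin m → Fin m → ℝ) (c : Fin n → Fin n → ℝ)
    (u : Fin rB → Fin m → ℝ) (v : Fin rC → Fin n → ℝ)
    (hu : ∀ p i, 0 ≤ u p i) (hv : ∀ q j, 0 ≤ v q j)
    (hb : ∀ i k, b i k = ∑ p, u p i * u p k)
    (hc : ∀ j l, c j l = ∑ q, v q j * v q l) :
    ∃ (R : ℕ) (xs : Fin R → Fin m → ℝ) (ys : Fin R → Fin n → ℝ),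
      (∀ t i, 0 ≤ xs t i) ∧ (∀ t j, 0 ≤ ys t j) ∧
      (∀ i j k l, b i k * c j l = ∑ t, xs t i * ys t j * xs t k * ys t l) := by
  refine ⟨rB * rC, fun t => u (finProdFinEquiv.symm t).1,
    fun t => v (finProdFinEquiv.symm t).2,
    fun t i => hu _ i, fun t j => hv _ j, fun i j k l => ?_⟩
  rw [hb, hc, Finset.sum_mul_sum]
  rw [show (∑ p : Fin rB, ∑ q : Fin rC, u p i * u p k * (v q j * v q l))
      = ∑ pq : Fin rB × Fin rC, u pq.1 i * u pq.1 k * (v pq.2 j * v pq.2 l) from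
    (Fintype.sum_prod_type (fun pq : Fin rB × Fin rC => u pq.1 i * u pq.1 k * (v pq.2 j * v pq.2 l))).symm]
  exact Fintype.sum_equiv finProdFinEquiv _ _ (fun pq => by
    simp only [Equiv.symm_apply_apply]; ring)
end

section
/- Let A be an m × n biquadratic Cauchy tensor with generating vectors c ∈ ℝ^m, d ∈ ℝ^n, i.e., a_{ijkl} = 1/(c_i + c_k + d_j + d_l). If A is strictly copositive, then c_i + d_j > 0 for all i ∈ [m], j ∈ [n], and hence c_i + c_k + d_j + d_l > 0 for all i, k ∈ [m], j, l ∈ [n]. -/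
open scoped BigOperators

/-- if a biquadratic Cauchy tensor is strictly copositive, then
`c_i + d_j > 0` for all `i, j`, hence all denominators are positive. -/
theorem cauchy_strictly_copositive_implies_positive {m n : ℕ}
    (c : Fin m → ℝ) (d : Fin n → ℝ)
    (hwell : ∀ (i k : Fin m) (j l : Fin n), c i + c k + d j + d l ≠ 0)
    (hsc : ∀ (x : Fin m → ℝ) (y : Fin n → ℝ),
      (∀ i, 0 ≤ x i) → x ≠ 0 → (∀ j, 0 ≤ y j) → y ≠ 0 →
      0 < ∑ i, ∑ j, ∑ k, ∑ l,
        (1 / (c i + c k + d j + d l)) * x i * y j * x k * y l) :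
    (∀ (i : Fin m) (j : Fin n), 0 < c i + d j) ∧
    (∀ (i k : Fin m) (j l : Fin n), 0 < c i + c k + d j + d l) := by
  have key : ∀ (i : Fin m) (j : Fin n), 0 < c i + d j := by
    intro i j
    have h := hsc (fun a => if a = i then 1 else 0) (fun b => if b = j then 1 else 0)
      (by intro a; split <;> norm_num)
      (by
        intro h; have := congrFun h i; simp at this)
      (by intro b; split <;> norm_num)
      (by
        intro h; have := congrFun h j; simp at this)
    simp only [mul_ite, mul_one, mul_zero, ite_mul, one_mul, zero_mul,
      Finset.sum_ite_eq', Finset.mem_univ, if_true] at h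
    have hne := hwell i i j j
    have : 0 < 1 / (c i + c i + d j + d j) := h
    have hpos : 0 < c i + c i + d j + d j := by
      by_contra hle
      push_neg at hle
      have : c i + c i + d j + d j < 0 := lt_of_le_of_ne hle hne
      have := one_div_neg.mpr this
      linarith
    linarith
  refine ⟨key, fun i k j l => ?_⟩
  have h1 := key i j
  have h2 := key k l
  linarith
end

section
/- Let c ∈ ℝ^m, d ∈ ℝ^n with c_i + c_k + d_j + d_l > 0 for all i, k, j, l, and let a_{ijkl} = 1/(c_i + c_k + d_j + d_l). Then for all x ∈ ℝ^m, y ∈ ℝ^n, A x y x y = ∫_0^∞ (Σ_i e^{-c_i s} x_i)^2 (Σ_j e^{-d_j s} y_j)^2 ds. -/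
open scoped BigOperators
open MeasureTheory Real

lemma cauchy_key_integral {b : ℝ} (hb : 0 < b) :
    ∫ s in Set.Ioi (0:ℝ), Real.exp (-b * s) = 1 / b := by
  have h := integral_exp_neg_mul_rpow one_pos hb
  simp only [Real.rpow_one, neg_div, div_one, Real.rpow_neg_one] at h
  rw [h, show (1:ℝ) + 1 = 2 by norm_num, Real.Gamma_two]; ring

/-- integral representation of the biquadratic form of a
positive biquadratic Cauchy tensor. -/
theorem cauchy_form_integral_representation {m n : ℕ}
    (c : Fin m → ℝ) (d : Fin n → ℝ)
    (hpos : ∀ (i k : Fin m) (j l : Fin n), 0 < c i + c k + d j + d l)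
    (x : Fin m → ℝ) (y : Fin n → ℝ) :
    (∑ i, ∑ j, ∑ k, ∑ l,
        (1 / (c i + c k + d j + d l)) * x i * y j * x k * y l)
      = ∫ s in Set.Ioi (0:ℝ),
          (∑ i, Real.exp (-(c i) * s) * x i) ^ 2 *
          (∑ j, Real.exp (-(d j) * s) * y j) ^ 2 := by
  symm
  have heq : Set.EqOn
      (fun s : ℝ => (∑ i, Real.exp (-(c i) * s) * x i) ^ 2 *
          (∑ j, Real.exp (-(d j) * s) * y j) ^ 2)
      (fun s : ℝ => ∑ p : Fin m × Fin n × Fin m × Fin n,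
          Real.exp (-(c p.1 + c p.2.2.1 + d p.2.1 + d p.2.2.2) * s) *
            (x p.1 * y p.2.1 * x p.2.2.1 * y p.2.2.2))
      (Set.Ioi 0) := by
    intro s _
    simp only [Fintype.sum_prod_type]
    rw [← mul_pow, Finset.sum_mul_sum, sq]
    simp only [Finset.sum_mul, Finset.mul_sum]
    refine Finset.sum_congr rfl fun i _ => Finset.sum_congr rfl fun j _ =>
      Finset.sum_congr rfl fun k _ => Finset.sum_congr rfl fun l _ => ?_
    rw [show -(c i + c k + d j + d l) * s
        = (-(c i) * s) + (-(d j) * s) + (-(c k) * s) + (-(d l) * s) by ring,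
      Real.exp_add, Real.exp_add, Real.exp_add]
    ring
  rw [MeasureTheory.setIntegral_congr_fun measurableSet_Ioi heq,
    MeasureTheory.integral_finset_sum _ (fun p _ =>
      (exp_neg_integrableOn_Ioi 0 (hpos p.1 p.2.2.1 p.2.1 p.2.2.2)).mul_const _)]
  simp only [Fintype.sum_prod_type]
  refine Finset.sum_congr rfl fun i _ => Finset.sum_congr rfl fun j _ =>
    Finset.sum_congr rfl fun k _ => Finset.sum_congr rfl fun l _ => ?_
  rw [MeasureTheory.integral_mul_const, cauchy_key_integral (hpos i k j l)]
  ring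
end

section
/- Let c ∈ ℝ^m, d ∈ ℝ^n satisfy c_i + d_j > 0 for all i ∈ [m], j ∈ [n], and let a_{ijkl} = 1/(c_i + c_k + d_j + d_l). Then A is strictly copositive: for all nonzero x ∈ ℝ^m_+ and nonzero y ∈ ℝ^n_+, Σ_{i,j,k,l} a_{ijkl} x_i y_j x_k y_l > 0. -/
open scoped BigOperators
open MeasureTheory Real Set

private lemma exp_int_aux {b : ℝ} (hb : 0 < b) :
    ∫ s in Ioi (0:ℝ), Real.exp (-b * s) = 1 / b := by
  have h := integral_comp_mul_left_Ioi (fun x => Real.exp (-x)) 0 hb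
  simp only [mul_zero, integral_exp_neg_Ioi, neg_zero, Real.exp_zero, smul_eq_mul,
    mul_one] at h
  simp only [neg_mul, h, one_div]

/-- a biquadratic Cauchy tensor with `c_i + d_j > 0` for all
`i, j` is strictly copositive. -/
theorem cauchy_positive_implies_strictly_copositive {m n : ℕ}
    (c : Fin m → ℝ) (d : Fin n → ℝ)
    (hpos : ∀ (i : Fin m) (j : Fin n), 0 < c i + d j) :
    ∀ (x : Fin m → ℝ) (y : Fin n → ℝ),
      (∀ i, 0 ≤ x i) → x ≠ 0 → (∀ j, 0 ≤ y j) → y ≠ 0 →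
      0 < ∑ i, ∑ j, ∑ k, ∑ l,
        (1 / (c i + c k + d j + d l)) * x i * y j * x k * y l := by
  intro x y hx hx0 hy hy0
  obtain ⟨i0, hi0⟩ : ∃ i, 0 < x i := by
    by_contra h
    push_neg at h
    exact hx0 (funext fun i => le_antisymm (h i) (hx i))
  obtain ⟨j0, hj0⟩ : ∃ j, 0 < y j := by
    by_contra h
    push_neg at h
    exact hy0 (funext fun j => le_antisymm (h j) (hy j))
  have hb : ∀ (i : Fin m) (j : Fin n) (k : Fin m) (l : Fin n),
      0 < c i + c k + d j + d l := fun i j k l => by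
    have h1 := hpos i j; have h2 := hpos k l; linarith
  set F : ℝ → ℝ := fun s => ∑ i, ∑ j, ∑ k, ∑ l,
      x i * y j * x k * y l * Real.exp (-(c i + c k + d j + d l) * s) with hF
  have hint : ∀ (i : Fin m) (j : Fin n) (k : Fin m) (l : Fin n),
      Integrable (fun s => x i * y j * x k * y l *
        Real.exp (-(c i + c k + d j + d l) * s)) (volume.restrict (Ioi (0:ℝ))) :=
    fun i j k l => (exp_neg_integrableOn_Ioi 0 (hb i j k l)).const_mul _
  have hFint : Integrable F (volume.restrict (Ioi (0:ℝ))) :=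
    integrable_finset_sum _ fun i _ => integrable_finset_sum _ fun j _ =>
      integrable_finset_sum _ fun k _ => integrable_finset_sum _ fun l _ => hint i j k l
  have key : ∑ i, ∑ j, ∑ k, ∑ l,
      (1 / (c i + c k + d j + d l)) * x i * y j * x k * y l
      = ∫ s in Ioi (0:ℝ), F s := by
    rw [hF]
    rw [integral_finset_sum _ fun i _ => integrable_finset_sum _ fun j _ =>
      integrable_finset_sum _ fun k _ => integrable_finset_sum _ fun l _ => hint i j k l]
    refine Finset.sum_congr rfl fun i _ => ?_
    rw [integral_finset_sum _ fun j _ => integrable_finset_sum _ fun k _ =>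
      integrable_finset_sum _ fun l _ => hint i j k l]
    refine Finset.sum_congr rfl fun j _ => ?_
    rw [integral_finset_sum _ fun k _ => integrable_finset_sum _ fun l _ => hint i j k l]
    refine Finset.sum_congr rfl fun k _ => ?_
    rw [integral_finset_sum _ fun l _ => hint i j k l]
    refine Finset.sum_congr rfl fun l _ => ?_
    rw [integral_const_mul, exp_int_aux (hb i j k l)]
    ring
  have hFpos : ∀ s : ℝ, 0 < F s := by
    intro s
    have hterm : ∀ (i : Fin m) (j : Fin n) (k : Fin m) (l : Fin n),
        0 ≤ x i * y j * x k * y l * Real.exp (-(c i + c k + d j + d l) * s) :=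
      fun i j k l => mul_nonneg (mul_nonneg (mul_nonneg (mul_nonneg (hx i) (hy j))
        (hx k)) (hy l)) (Real.exp_pos _).le
    refine Finset.sum_pos' (fun i _ => Finset.sum_nonneg fun j _ =>
      Finset.sum_nonneg fun k _ => Finset.sum_nonneg fun l _ => hterm i j k l)
      ⟨i0, Finset.mem_univ _, ?_⟩
    refine Finset.sum_pos' (fun j _ => Finset.sum_nonneg fun k _ =>
      Finset.sum_nonneg fun l _ => hterm i0 j k l) ⟨j0, Finset.mem_univ _, ?_⟩
    refine Finset.sum_pos' (fun k _ => Finset.sum_nonneg fun l _ => hterm i0 j0 k l)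
      ⟨i0, Finset.mem_univ _, ?_⟩
    refine Finset.sum_pos' (fun l _ => hterm i0 j0 i0 l) ⟨j0, Finset.mem_univ _, ?_⟩
    exact mul_pos (mul_pos (mul_pos (mul_pos hi0 hj0) hi0) hj0) (Real.exp_pos _)
  rw [key]
  rw [setIntegral_pos_iff_support_of_nonneg_ae
    (ae_of_all _ fun s => (hFpos s).le) hFint]
  have hsupp : Function.support F ∩ Ioi (0:ℝ) = Ioi (0:ℝ) :=
    inter_eq_right.mpr fun s _ => (hFpos s).ne'
  rw [hsupp, Real.volume_Ioi]
  exact ENNReal.zero_lt_top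
end

section
/- The m × n biquadratic Pascal tensor P with p_{ijkl} = (i+j+k+l−4)! / ((i−1)!(j−1)!(k−1)!(l−1)!) is positive definite: for all nonzero x ∈ ℝ^m and nonzero y ∈ ℝ^n, Σ_{i,k=1}^m Σ_{j,l=1}^n p_{ijkl} x_i y_j x_k y_l > 0. -/
open scoped BigOperators
open MeasureTheory Real Set Polynomial

private lemma integ_pow_exp (k : ℕ) :
    IntegrableOn (fun t : ℝ => t ^ k * Real.exp (-t)) (Ioi 0) := by
  have h := Real.GammaIntegral_convergent (s := (k + 1 : ℝ)) (by positivity)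
  refine h.congr_fun (fun t ht => ?_) measurableSet_Ioi
  dsimp only
  rw [add_sub_cancel_right, Real.rpow_natCast, mul_comm]

private lemma int_pow_exp (k : ℕ) :
    ∫ t in Ioi (0:ℝ), t ^ k * Real.exp (-t) = k.factorial := by
  have h := Real.Gamma_eq_integral (s := (k + 1 : ℝ)) (by positivity)
  rw [Real.Gamma_nat_eq_factorial] at h
  rw [h]
  refine setIntegral_congr_fun measurableSet_Ioi (fun t ht => ?_)
  rw [add_sub_cancel_right, Real.rpow_natCast, mul_comm]

private lemma expand_sum {m n : ℕ} (A : Fin m → ℝ) (B : Fin n → ℝ) (e : ℝ) :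
    ∑ i, ∑ j, ∑ k, ∑ l, (A i * B j * A k * B l) * e
      = ((∑ i, A i) * (∑ j, B j)) ^ 2 * e := by
  calc ∑ i, ∑ j, ∑ k, ∑ l, (A i * B j * A k * B l) * e
      = ∑ i, ∑ j, ∑ k, (A i * B j * A k * e) * ∑ l, B l := by
        refine Finset.sum_congr rfl fun i _ => Finset.sum_congr rfl fun j _ =>
          Finset.sum_congr rfl fun k _ => ?_
        rw [Finset.mul_sum]
        exact Finset.sum_congr rfl fun l _ => by ring
    _ = ∑ i, ∑ j, (A i * B j * e * ∑ l, B l) * ∑ k, A k := by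
        refine Finset.sum_congr rfl fun i _ => Finset.sum_congr rfl fun j _ => ?_
        rw [Finset.mul_sum]
        exact Finset.sum_congr rfl fun k _ => by ring
    _ = ∑ i, (A i * e * (∑ l, B l) * ∑ k, A k) * ∑ j, B j := by
        refine Finset.sum_congr rfl fun i _ => ?_
        rw [Finset.mul_sum]
        exact Finset.sum_congr rfl fun j _ => by ring
    _ = (e * (∑ l, B l) * (∑ k, A k) * ∑ j, B j) * ∑ i, A i := by
        rw [Finset.mul_sum]
        exact Finset.sum_congr rfl fun i _ => by ring
    _ = ((∑ i, A i) * (∑ j, B j)) ^ 2 * e := by ring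

/-- the biquadratic Pascal tensor is positive definite. -/
theorem pascal_positive_definite {m n : ℕ}
    (x : Fin m → ℝ) (y : Fin n → ℝ) (hx : x ≠ 0) (hy : y ≠ 0) :
    0 < ∑ i, ∑ j, ∑ k, ∑ l,
      ((Nat.factorial (i.1 + j.1 + k.1 + l.1) : ℝ) /
          ((Nat.factorial i.1 : ℝ) * (Nat.factorial j.1) *
            (Nat.factorial k.1) * (Nat.factorial l.1)))
        * x i * y j * x k * y l := by
  set a : Fin m → ℝ → ℝ := fun i t => x i * t ^ i.1 / (Nat.factorial i.1) with ha
  set b : Fin n → ℝ → ℝ := fun j t => y j * t ^ j.1 / (Nat.factorial j.1) with hb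
  have habcd : ∀ (i k : Fin m) (j l : Fin n) (t : ℝ),
      (a i t * b j t * a k t * b l t) * Real.exp (-t) =
        (x i * y j * x k * y l /
            ((Nat.factorial i.1 : ℝ) * (Nat.factorial j.1) * (Nat.factorial k.1)
              * (Nat.factorial l.1))) *
          (t ^ (i.1 + j.1 + k.1 + l.1) * Real.exp (-t)) := by
    intro i k j l t
    simp only [ha, hb, pow_add]
    ring
  have hint : ∀ (i k : Fin m) (j l : Fin n),
      IntegrableOn (fun t => (a i t * b j t * a k t * b l t) * Real.exp (-t)) (Ioi 0) := by
    intro i k j l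
    have h2 : IntegrableOn (fun t : ℝ =>
        (x i * y j * x k * y l /
            ((Nat.factorial i.1 : ℝ) * (Nat.factorial j.1) * (Nat.factorial k.1)
              * (Nat.factorial l.1))) *
          (t ^ (i.1 + j.1 + k.1 + l.1) * Real.exp (-t))) (Ioi 0) :=
      (integ_pow_exp (i.1 + j.1 + k.1 + l.1)).const_mul _
    exact h2.congr_fun (fun t _ => (habcd i k j l t).symm) measurableSet_Ioi
  have hterm : ∀ (i k : Fin m) (j l : Fin n),
      ((Nat.factorial (i.1 + j.1 + k.1 + l.1) : ℝ) /
          ((Nat.factorial i.1 : ℝ) * (Nat.factorial j.1) *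
            (Nat.factorial k.1) * (Nat.factorial l.1)))
        * x i * y j * x k * y l =
      ∫ t in Ioi (0:ℝ), (a i t * b j t * a k t * b l t) * Real.exp (-t) := by
    intro i k j l
    rw [setIntegral_congr_fun measurableSet_Ioi (fun t _ => habcd i k j l t),
      integral_const_mul, int_pow_exp]
    ring
  have hsum : (∑ i, ∑ j, ∑ k, ∑ l,
      ((Nat.factorial (i.1 + j.1 + k.1 + l.1) : ℝ) /
          ((Nat.factorial i.1 : ℝ) * (Nat.factorial j.1) *
            (Nat.factorial k.1) * (Nat.factorial l.1)))
        * x i * y j * x k * y l) =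
      ∫ t in Ioi (0:ℝ), ((∑ i, a i t) * (∑ j, b j t)) ^ 2 * Real.exp (-t) := by
    have h1 : (∑ i, ∑ j, ∑ k, ∑ l,
        ((Nat.factorial (i.1 + j.1 + k.1 + l.1) : ℝ) /
            ((Nat.factorial i.1 : ℝ) * (Nat.factorial j.1) *
              (Nat.factorial k.1) * (Nat.factorial l.1)))
          * x i * y j * x k * y l) =
        ∑ p : Fin m × Fin n × Fin m × Fin n, ∫ t in Ioi (0:ℝ),
          (a p.1 t * b p.2.1 t * a p.2.2.1 t * b p.2.2.2 t) * Real.exp (-t) := by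
      rw [Fintype.sum_prod_type]
      refine Finset.sum_congr rfl fun i _ => ?_
      rw [Fintype.sum_prod_type]
      refine Finset.sum_congr rfl fun j _ => ?_
      rw [Fintype.sum_prod_type]
      exact Finset.sum_congr rfl fun k _ => Finset.sum_congr rfl fun l _ => hterm i k j l
    rw [h1, ← integral_finset_sum Finset.univ
      (f := fun (p : Fin m × Fin n × Fin m × Fin n) (t : ℝ) =>
        (a p.1 t * b p.2.1 t * a p.2.2.1 t * b p.2.2.2 t) * Real.exp (-t))
      (fun p _ => hint p.1 p.2.2.1 p.2.1 p.2.2.2)]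
    refine setIntegral_congr_fun measurableSet_Ioi (fun t _ => ?_)
    rw [Fintype.sum_prod_type]
    simp_rw [Fintype.sum_prod_type]
    exact expand_sum (fun i => a i t) (fun j => b j t) (Real.exp (-t))
  rw [hsum]
  set g : ℝ → ℝ := fun t => (∑ i, a i t) * (∑ j, b j t) with hg
  set p : ℝ[X] := ∑ i : Fin m, Polynomial.C (x i / (Nat.factorial i.1 : ℝ)) * X ^ i.1 with hp
  set q : ℝ[X] := ∑ j : Fin n, Polynomial.C (y j / (Nat.factorial j.1 : ℝ)) * X ^ j.1 with hq
  have hpe : ∀ t, Polynomial.eval t p = ∑ i, a i t := by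
    intro t
    simp only [hp, Polynomial.eval_finset_sum, Polynomial.eval_mul, Polynomial.eval_C,
      Polynomial.eval_pow, Polynomial.eval_X, ha]
    exact Finset.sum_congr rfl fun i _ => by ring
  have hqe : ∀ t, Polynomial.eval t q = ∑ j, b j t := by
    intro t
    simp only [hq, Polynomial.eval_finset_sum, Polynomial.eval_mul, Polynomial.eval_C,
      Polynomial.eval_pow, Polynomial.eval_X, hb]
    exact Finset.sum_congr rfl fun j _ => by ring
  obtain ⟨i₀, hi₀⟩ : ∃ i, x i ≠ 0 := Function.ne_iff.mp hx
  obtain ⟨j₀, hj₀⟩ : ∃ j, y j ≠ 0 := Function.ne_iff.mp hy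
  have hcoeff : ∀ {N : ℕ} (z : Fin N → ℝ) (i₀ : Fin N),
      (∑ i : Fin N, Polynomial.C (z i / (Nat.factorial i.1 : ℝ)) * X ^ i.1).coeff i₀.1
        = z i₀ / (Nat.factorial i₀.1 : ℝ) := by
    intro N z i₀
    rw [Polynomial.finset_sum_coeff]
    rw [Finset.sum_eq_single i₀]
    · simp
    · intro i _ hne
      rw [Polynomial.coeff_C_mul, Polynomial.coeff_X_pow, if_neg, mul_zero]
      exact fun h => hne (Fin.ext h.symm)
    · simp
  have hpne : p ≠ 0 := fun h => by
    have h0 := hcoeff x i₀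
    rw [← hp, h, Polynomial.coeff_zero] at h0
    exact hi₀ ((div_eq_zero_iff.mp h0.symm).resolve_right
      (Nat.cast_ne_zero.mpr (Nat.factorial_ne_zero _)))
  have hqne : q ≠ 0 := fun h => by
    have h0 := hcoeff y j₀
    rw [← hq, h, Polynomial.coeff_zero] at h0
    exact hj₀ ((div_eq_zero_iff.mp h0.symm).resolve_right
      (Nat.cast_ne_zero.mpr (Nat.factorial_ne_zero _)))
  have hZfin : Set.Finite {t : ℝ | g t = 0} := by
    refine (Polynomial.finite_setOf_isRoot (mul_ne_zero hpne hqne)).subset fun t ht => ?_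
    simp only [Set.mem_setOf_eq, Polynomial.IsRoot, Polynomial.eval_mul, hpe, hqe]
    exact ht
  have hF_nonneg : ∀ t : ℝ, 0 ≤ g t ^ 2 * Real.exp (-t) := fun t => by positivity
  have hF_int : IntegrableOn (fun t => g t ^ 2 * Real.exp (-t)) (Ioi 0) := by
    have hInt : IntegrableOn (fun t : ℝ => ∑ p : Fin m × Fin n × Fin m × Fin n,
        (a p.1 t * b p.2.1 t * a p.2.2.1 t * b p.2.2.2 t) * Real.exp (-t)) (Ioi 0) :=
      integrable_finset_sum _ (fun p _ => hint p.1 p.2.2.1 p.2.1 p.2.2.2)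
    refine hInt.congr_fun (fun t _ => ?_) measurableSet_Ioi
    simp_rw [Fintype.sum_prod_type]
    rw [hg]
    exact expand_sum (fun i => a i t) (fun j => b j t) (Real.exp (-t))
  rw [setIntegral_pos_iff_support_of_nonneg_ae
    (Filter.Eventually.of_forall fun t => hF_nonneg t) hF_int]
  have hsub : Ioi (0:ℝ) \ {t : ℝ | g t = 0} ⊆
      Function.support (fun t => g t ^ 2 * Real.exp (-t)) ∩ Ioi 0 := by
    rintro t ⟨ht, hgt⟩
    refine ⟨?_, ht⟩
    simp only [Function.mem_support]
    have hgne : g t ≠ 0 := hgt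
    positivity
  calc (0 : ENNReal) < volume (Ioi (0:ℝ) \ {t : ℝ | g t = 0}) := by
        rw [measure_diff_null (hZfin.measure_zero _), Real.volume_Ioi]
        exact ENNReal.zero_lt_top
    _ ≤ _ := measure_mono hsub
end
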